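/- Uniform convergence of multivariate Bernstein polynomials (Weierstrass on the simplex): if $F: \mathcal{S} \to \mathbb{R}$ is continuous on the $d$-dimensional simplex $\mathcal{S}$, then $\sup_{x \in \mathcal{S}} |F_m^\star(x) - F(x)| \to 0$ as $m \to \infty$, where $F_m^\star(x) = \sum_{k \in \mathbb{N}_0^d \cap m\mathcal{S}} F(k/m) P_{k,m}(x)$. -/

import Mathlib

open MeasureTheory Finset

/-- The d-dimensional unit simplex. -/
def simplexSet (d : ℕ) : Set (Fin d → ℝ) :=
  {x | (∀ i, 0 ≤ x i ∧ x i ≤ 1) ∧ ∑ i, x i ≤ 1}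

/-- The lattice points of the discrete simplex `ℕ₀^d ∩ mS`. -/
def grid (d m : ℕ) : Finset (Fin d → ℕ) :=
  (Finset.Icc 0 (fun _ => m)).filter (fun k => ∑ i, k i ≤ m)

/-- Multinomial(m, x) probability mass at k. -/
noncomputable def Pw (d m : ℕ) (k : Fin d → ℕ) (x : Fin d → ℝ) : ℝ :=
  ((m.factorial : ℝ) / ((m - ∑ i, k i).factorial * ∏ i, (k i).factorial)) *
    (1 - ∑ i, x i) ^ (m - ∑ i, k i) * ∏ i, x i ^ k i
/-- Bernstein polynomial of order m for F on the simplex. -/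
noncomputable def bernsteinPoly (d m : ℕ) (F : (Fin d → ℝ) → ℝ) (x : Fin d → ℝ) : ℝ :=
  ∑ k ∈ grid d m, F (fun i => (k i : ℝ) / m) * Pw d m k x

lemma mem_grid {d m : ℕ} {k : Fin d → ℕ} : k ∈ grid d m ↔ ∑ i, k i ≤ m := by
  simp only [grid, Finset.mem_filter, Finset.mem_Icc, and_iff_right_iff_imp]
  intro h
  refine ⟨fun i => Nat.zero_le _, fun i => ?_⟩
  exact le_trans (Finset.single_le_sum (f := k) (fun j _ => Nat.zero_le _) (Finset.mem_univ i)) h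

lemma star (d m : ℕ) (y : Option (Fin d) → ℝ) :
    (∑ a : Option (Fin d), y a) ^ m =
      ∑ k ∈ grid d m,
        ((m.factorial : ℝ) / ((m - ∑ i, k i).factorial * ∏ i, (k i).factorial)) *
          ((y none) ^ (m - ∑ i, k i) * ∏ i, (y (some i)) ^ k i) := by
  rw [Finset.sum_pow_eq_sum_piAntidiag]
  refine Finset.sum_nbij' (i := fun K => fun i => K (some i))
    (j := fun k => fun a => a.elim (m - ∑ i, k i) k) ?_ ?_ ?_ ?_ ?_
  · intro K hK
    rw [Finset.mem_piAntidiag] at hK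
    simp only [mem_grid]
    have := hK.1
    rw [Fintype.sum_option] at this
    omega
  · intro k hk
    rw [mem_grid] at hk
    rw [Finset.mem_piAntidiag]
    constructor
    · simp only [Fintype.sum_option, Option.elim]
      omega
    · intro a _; exact Finset.mem_univ a
  · intro K hK
    rw [Finset.mem_piAntidiag] at hK
    funext a
    cases a with
    | none =>
      simp only [Option.elim]
      have := hK.1
      rw [Fintype.sum_option] at this
      omega
    | some i => rfl
  · intro k hk; rfl
  · intro K hK
    rw [Finset.mem_piAntidiag] at hK
    have hsum : K none + ∑ i, K (some i) = m := by
      have := hK.1; rwa [Fintype.sum_option] at this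
    have hnone : K none = m - ∑ i, K (some i) := by omega
    have hprod : ∏ a : Option (Fin d), (K a).factorial
        = (m - ∑ i, K (some i)).factorial * ∏ i, (K (some i)).factorial := by
      rw [Fintype.prod_option, hnone]
    have hcast : (Nat.multinomial Finset.univ K : ℝ)
        = (m.factorial : ℝ) / ((m - ∑ i, K (some i)).factorial * ∏ i, (K (some i)).factorial) := by
      have hspec := Nat.multinomial_spec Finset.univ K
      rw [hK.1, hprod, mul_comm] at hspec
      rw [eq_div_iff (by positivity)]
      exact_mod_cast hspec
    rw [hcast, Fintype.prod_option, hnone]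


lemma sum_Pw (d m : ℕ) (x : Fin d → ℝ) : ∑ k ∈ grid d m, Pw d m k x = 1 := by
  have h := star d m (fun a => a.elim (1 - ∑ i, x i) x)
  simp only [Fintype.sum_option, Option.elim] at h
  rw [show (1 - ∑ i, x i) + ∑ i, x i = 1 by ring, one_pow] at h
  rw [h]
  exact Finset.sum_congr rfl fun k _ => by simp only [Pw]; ring

lemma moment_gen (d m : ℕ) (x : Fin d → ℝ) (i : Fin d) (t : ℝ) :
    ∑ k ∈ grid d m, t ^ k i * Pw d m k x = (1 + (t - 1) * x i) ^ m := by
  have h := star d m (fun a => a.elim (1 - ∑ j, x j) (fun j => if j = i then t * x j else x j))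
  simp only [Fintype.sum_option, Option.elim] at h
  have hs : ∑ j, (if j = i then t * x j else x j) = ((t - 1) * x i + ∑ j, x j) := by
    have h1 : ∀ j : Fin d, (if j = i then t * x j else x j)
        = (if j = i then (t - 1) * x i else 0) + x j := by
      intro j
      by_cases hj : j = i
      · subst hj; simp; ring
      · simp [hj]
    rw [Finset.sum_congr rfl fun j _ => h1 j, Finset.sum_add_distrib, Finset.sum_ite_eq']
    simp
  rw [hs, show (1 - ∑ j, x j) + ((t - 1) * x i + ∑ j, x j) = 1 + (t - 1) * x i by ring] at h
  rw [h]
  apply Finset.sum_congr rfl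
  intro k _
  have hp : ∏ j, (if j = i then t * x j else x j) ^ k j
      = t ^ k i * ∏ j, x j ^ k j := by
    have h1 : ∀ j : Fin d, (if j = i then t * x j else x j) ^ k j
        = (if j = i then t ^ k j else 1) * x j ^ k j := by
      intro j
      by_cases hj : j = i
      · subst hj; simp [mul_pow]
      · simp [hj]
    rw [Finset.prod_congr rfl fun j _ => h1 j, Finset.prod_mul_distrib, Finset.prod_ite_eq']
    simp
  rw [hp]
  simp only [Pw]; ring

lemma moment1 (d m : ℕ) (x : Fin d → ℝ) (i : Fin d) :
    ∑ k ∈ grid d m, (k i : ℝ) * Pw d m k x = m * x i := by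
  have heq : (fun t : ℝ => ∑ k ∈ grid d m, t ^ k i * Pw d m k x)
      = fun t => (1 + (t - 1) * x i) ^ m := funext (moment_gen d m x i)
  have hinner : ∀ t : ℝ, HasDerivAt (fun t : ℝ => 1 + (t - 1) * x i) (x i) t := by
    intro t
    simpa using (((hasDerivAt_id t).sub_const 1).mul_const (x i)).const_add 1
  have hf : HasDerivAt (fun t : ℝ => ∑ k ∈ grid d m, t ^ k i * Pw d m k x)
      (∑ k ∈ grid d m, ((k i : ℝ) * (1 : ℝ) ^ (k i - 1)) * Pw d m k x) 1 :=
    HasDerivAt.fun_sum fun k _ => (hasDerivAt_pow (k i) 1).mul_const (Pw d m k x)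
  have hg : HasDerivAt (fun t : ℝ => (1 + (t - 1) * x i) ^ m)
      (((m : ℝ) * (1 + ((1:ℝ) - 1) * x i) ^ (m - 1)) * x i) 1 :=
    (hasDerivAt_pow m _).comp 1 (hinner 1)
  rw [heq] at hf
  have := hf.unique hg
  simpa using this

lemma moment2 (d m : ℕ) (x : Fin d → ℝ) (i : Fin d) :
    ∑ k ∈ grid d m, (k i : ℝ) * ((k i - 1 : ℕ) : ℝ) * Pw d m k x
      = (m : ℝ) * ((m - 1 : ℕ) : ℝ) * x i ^ 2 := by
  have hinner : ∀ t : ℝ, HasDerivAt (fun t : ℝ => 1 + (t - 1) * x i) (x i) t := by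
    intro t
    simpa using (((hasDerivAt_id t).sub_const 1).mul_const (x i)).const_add 1
  have hfg : ∀ t : ℝ, ∑ k ∈ grid d m, ((k i : ℝ) * t ^ (k i - 1)) * Pw d m k x
      = ((m : ℝ) * (1 + (t - 1) * x i) ^ (m - 1)) * x i := by
    intro t
    have hf : HasDerivAt (fun t : ℝ => ∑ k ∈ grid d m, t ^ k i * Pw d m k x)
        (∑ k ∈ grid d m, ((k i : ℝ) * t ^ (k i - 1)) * Pw d m k x) t :=
      HasDerivAt.fun_sum fun k _ => (hasDerivAt_pow (k i) t).mul_const (Pw d m k x)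
    have hg : HasDerivAt (fun t : ℝ => (1 + (t - 1) * x i) ^ m)
        (((m : ℝ) * (1 + (t - 1) * x i) ^ (m - 1)) * x i) t :=
      (hasDerivAt_pow m _).comp t (hinner t)
    have heq : (fun t : ℝ => ∑ k ∈ grid d m, t ^ k i * Pw d m k x)
        = fun t => (1 + (t - 1) * x i) ^ m := funext (moment_gen d m x i)
    rw [heq] at hf
    exact hf.unique hg
  have heq2 : (fun t : ℝ => ∑ k ∈ grid d m, ((k i : ℝ) * t ^ (k i - 1)) * Pw d m k x)
      = fun t => ((m : ℝ) * (1 + (t - 1) * x i) ^ (m - 1)) * x i := funext hfg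
  have hf2 : HasDerivAt (fun t : ℝ => ∑ k ∈ grid d m, ((k i : ℝ) * t ^ (k i - 1)) * Pw d m k x)
      (∑ k ∈ grid d m, ((k i : ℝ) * (((k i - 1 : ℕ) : ℝ) * (1:ℝ) ^ (k i - 1 - 1))) * Pw d m k x) 1 :=
    HasDerivAt.fun_sum fun k _ =>
      (((hasDerivAt_pow (k i - 1) (1:ℝ)).const_mul ((k i : ℝ))).mul_const (Pw d m k x))
  have hg2 : HasDerivAt (fun t : ℝ => ((m : ℝ) * (1 + (t - 1) * x i) ^ (m - 1)) * x i)
      (((m : ℝ) * ((((m - 1 : ℕ) : ℝ) * (1 + ((1:ℝ) - 1) * x i) ^ (m - 1 - 1)) * x i)) * x i) 1 :=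
    ((((hasDerivAt_pow (m - 1) _).comp 1 (hinner 1)).const_mul ((m : ℝ))).mul_const (x i))
  rw [heq2] at hf2
  have h3 : ∑ k ∈ grid d m, (k i : ℝ) * ((k i - 1 : ℕ) : ℝ) * Pw d m k x
      = ∑ k ∈ grid d m, ((k i : ℝ) * (((k i - 1 : ℕ) : ℝ) * (1:ℝ) ^ (k i - 1 - 1))) * Pw d m k x :=
    Finset.sum_congr rfl fun k _ => by ring
  rw [h3, hf2.unique hg2]
  ring

lemma variance (d m : ℕ) (hm : 1 ≤ m) (x : Fin d → ℝ) (i : Fin d) :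
    ∑ k ∈ grid d m, ((k i : ℝ) / m - x i) ^ 2 * Pw d m k x = x i * (1 - x i) / m := by
  have hm0 : (m : ℝ) ≠ 0 := Nat.cast_ne_zero.2 (by omega)
  have key : ∀ k : Fin d → ℕ, ((k i : ℝ) / m - x i) ^ 2 * Pw d m k x
      = (1 / (m : ℝ) ^ 2) * ((k i : ℝ) * ((k i - 1 : ℕ) : ℝ) * Pw d m k x)
        + (1 / (m : ℝ) ^ 2 - 2 * x i / m) * ((k i : ℝ) * Pw d m k x)
        + x i ^ 2 * Pw d m k x := by
    intro k
    have hc : (k i : ℝ) * ((k i - 1 : ℕ) : ℝ) = (k i : ℝ) * ((k i : ℝ) - 1) := by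
      rcases Nat.eq_zero_or_pos (k i) with h | h
      · simp [h]
      · rw [Nat.cast_sub h, Nat.cast_one]
    rw [hc]; field_simp; ring
  rw [Finset.sum_congr rfl fun k _ => key k, Finset.sum_add_distrib, Finset.sum_add_distrib,
    ← Finset.mul_sum, ← Finset.mul_sum, ← Finset.mul_sum, moment2, moment1, sum_Pw]
  rw [show ((m - 1 : ℕ) : ℝ) = (m : ℝ) - 1 by rw [Nat.cast_sub hm, Nat.cast_one]]
  field_simp
  ring


lemma Pw_nonneg {d m : ℕ} (k : Fin d → ℕ) {x : Fin d → ℝ} (hx : x ∈ simplexSet d) :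
    0 ≤ Pw d m k x := by
  obtain ⟨h1, h2⟩ := hx
  apply mul_nonneg (mul_nonneg _ _) _
  · positivity
  · exact pow_nonneg (by linarith) _
  · exact Finset.prod_nonneg fun i _ => pow_nonneg (h1 i).1 _


lemma isCompact_simplex (d : ℕ) : IsCompact (simplexSet d) := by
  have hclosed : IsClosed (simplexSet d) := by
    have h1 : simplexSet d
        = (⋂ i, {x : Fin d → ℝ | 0 ≤ x i ∧ x i ≤ 1}) ∩ {x | ∑ i, x i ≤ 1} := by
      ext x; simp [simplexSet, Set.mem_iInter, forall_and]
    rw [h1]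
    refine IsClosed.inter (isClosed_iInter fun i => ?_)
      (isClosed_le (continuous_finset_sum _ fun i _ => continuous_apply i) continuous_const)
    exact (isClosed_le continuous_const (continuous_apply i)).inter
      (isClosed_le (continuous_apply i) continuous_const)
  have hsub : simplexSet d ⊆ Set.Icc (fun _ => 0) (fun _ => 1) :=
    fun x hx => ⟨fun i => (hx.1 i).1, fun i => (hx.1 i).2⟩
  exact isCompact_Icc.of_isClosed_subset hclosed hsub

lemma grid_div_mem {d m : ℕ} (hm : 1 ≤ m) {k : Fin d → ℕ} (hk : k ∈ grid d m) :
    (fun i => (k i : ℝ) / m) ∈ simplexSet d := by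
  rw [mem_grid] at hk
  have hm0 : (0 : ℝ) < m := by exact_mod_cast hm
  refine ⟨fun i => ⟨by positivity, ?_⟩, ?_⟩
  · rw [div_le_one hm0]
    exact_mod_cast le_trans
      (Finset.single_le_sum (f := k) (fun j _ => Nat.zero_le _) (Finset.mem_univ i)) hk
  · rw [← Finset.sum_div, div_le_one hm0]
    exact_mod_cast hk

/-- Weierstrass-type uniform convergence of Bernstein polynomials on the simplex. -/
theorem bernstein_poly_uniform_convergence (d : ℕ) (F : (Fin d → ℝ) → ℝ)
    (hF : ContinuousOn F (simplexSet d)) :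
    ∀ ε > (0 : ℝ), ∃ M : ℕ, ∀ m : ℕ, M ≤ m → ∀ x ∈ simplexSet d,
      |bernsteinPoly d m F x - F x| ≤ ε := by
  intro ε hε
  have hScomp := isCompact_simplex d
  have hUC := hScomp.uniformContinuousOn_of_continuous hF
  rw [Metric.uniformContinuousOn_iff] at hUC
  obtain ⟨δ, hδ, hδ'⟩ := hUC (ε / 2) (by linarith)
  obtain ⟨C, hC⟩ := hScomp.exists_bound_of_continuousOn hF
  have h0mem : (0 : Fin d → ℝ) ∈ simplexSet d := ⟨fun i => by norm_num, by simp⟩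
  have hC0 : 0 ≤ C := le_trans (norm_nonneg _) (hC 0 h0mem)
  refine ⟨⌈C * d / (δ ^ 2 * ε)⌉₊ + 1, fun m hm x hx => ?_⟩
  have hm1 : 1 ≤ m := le_trans (by omega) hm
  have hmpos : (0 : ℝ) < m := by exact_mod_cast hm1
  have hsum1 := sum_Pw d m x
  have hdiff : bernsteinPoly d m F x - F x
      = ∑ k ∈ grid d m, (F (fun i => (k i : ℝ) / m) - F x) * Pw d m k x := by
    have h : ∑ k ∈ grid d m, (F (fun i => (k i : ℝ) / m) - F x) * Pw d m k x
        = bernsteinPoly d m F x - F x * ∑ k ∈ grid d m, Pw d m k x := by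
      rw [bernsteinPoly, Finset.mul_sum, ← Finset.sum_sub_distrib]
      exact Finset.sum_congr rfl fun k _ => by ring
    rw [h, hsum1, mul_one]
  rw [hdiff]
  have habs : |∑ k ∈ grid d m, (F (fun i => (k i : ℝ) / m) - F x) * Pw d m k x|
      ≤ ∑ k ∈ grid d m, |F (fun i => (k i : ℝ) / m) - F x| * Pw d m k x := by
    refine le_trans (Finset.abs_sum_le_sum_abs _ _) (Finset.sum_le_sum fun k hk => ?_)
    rw [abs_mul, abs_of_nonneg (Pw_nonneg k hx)]
  refine le_trans habs ?_
  have hpt : ∀ k ∈ grid d m, |F (fun i => (k i : ℝ) / m) - F x| * Pw d m k x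
      ≤ (ε / 2) * Pw d m k x
        + (2 * C / δ ^ 2) * ((∑ i, ((k i : ℝ) / m - x i) ^ 2) * Pw d m k x) := by
    intro k hk
    have hkx : (fun i => (k i : ℝ) / m) ∈ simplexSet d := grid_div_mem hm1 hk
    have hPw := Pw_nonneg (m := m) k hx
    have hSnn : (0 : ℝ) ≤ ∑ i, ((k i : ℝ) / m - x i) ^ 2 :=
      Finset.sum_nonneg fun i _ => sq_nonneg _
    by_cases hnear : dist (fun i => (k i : ℝ) / m) x < δ
    · have h1 := hδ' _ hkx x hx hnear
      rw [Real.dist_eq] at h1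
      have h2 : |F (fun i => (k i : ℝ) / m) - F x| * Pw d m k x ≤ (ε / 2) * Pw d m k x :=
        mul_le_mul_of_nonneg_right h1.le hPw
      nlinarith [mul_nonneg (mul_nonneg hSnn hPw)
        (div_nonneg (by linarith : (0:ℝ) ≤ 2 * C) (sq_nonneg δ))]
    · have hfar : δ ^ 2 ≤ ∑ i, ((k i : ℝ) / m - x i) ^ 2 := by
        have hne : ¬ ∀ i, dist ((k i : ℝ) / m) (x i) < δ := fun hall =>
          hnear ((dist_pi_lt_iff hδ).2 hall)
        push_neg at hne
        obtain ⟨i, hi⟩ := hne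
        have h1 : δ ^ 2 ≤ ((k i : ℝ) / m - x i) ^ 2 := by
          rw [Real.dist_eq] at hi
          calc δ ^ 2 ≤ |(k i : ℝ) / m - x i| ^ 2 := pow_le_pow_left₀ hδ.le hi 2
            _ = _ := sq_abs _
        exact le_trans h1 (Finset.single_le_sum (f := fun j => ((k j : ℝ) / m - x j) ^ 2)
          (fun j _ => sq_nonneg _) (Finset.mem_univ i))
      have hFb : |F (fun i => (k i : ℝ) / m) - F x| ≤ 2 * C := by
        have h1 := hC _ hkx
        have h2 := hC x hx
        simp only [Real.norm_eq_abs] at h1 h2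
        calc |F (fun i => (k i : ℝ) / m) - F x|
            ≤ |F (fun i => (k i : ℝ) / m)| + |F x| := by
              rw [sub_eq_add_neg]
              exact (abs_add_le _ _).trans (by rw [abs_neg])
          _ ≤ 2 * C := by linarith
      have h3 : |F (fun i => (k i : ℝ) / m) - F x| * Pw d m k x ≤ 2 * C * Pw d m k x :=
        mul_le_mul_of_nonneg_right hFb hPw
      have hc2 : 2 * C = (2 * C / δ ^ 2) * δ ^ 2 := by field_simp
      have h4 : 2 * C * Pw d m k x
          ≤ (2 * C / δ ^ 2) * ((∑ i, ((k i : ℝ) / m - x i) ^ 2) * Pw d m k x) := by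
        calc 2 * C * Pw d m k x = ((2 * C / δ ^ 2) * δ ^ 2) * Pw d m k x := by rw [← hc2]
          _ ≤ ((2 * C / δ ^ 2) * (∑ i, ((k i : ℝ) / m - x i) ^ 2)) * Pw d m k x :=
              mul_le_mul_of_nonneg_right
                (mul_le_mul_of_nonneg_left hfar (by positivity)) hPw
          _ = _ := by ring
      have h5 : 0 ≤ (ε / 2) * Pw d m k x := mul_nonneg (by linarith) hPw
      linarith
  refine le_trans (Finset.sum_le_sum hpt) ?_
  rw [Finset.sum_add_distrib, ← Finset.mul_sum, ← Finset.mul_sum, hsum1, mul_one]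
  have hswap : ∑ k ∈ grid d m, (∑ i, ((k i : ℝ) / m - x i) ^ 2) * Pw d m k x
      = ∑ i, x i * (1 - x i) / m := by
    rw [Finset.sum_congr rfl fun k (_ : k ∈ grid d m) =>
      (Finset.sum_mul _ _ (Pw d m k x) : _), Finset.sum_comm]
    exact Finset.sum_congr rfl fun i _ => variance d m hm1 x i
  rw [hswap]
  have hbound2 : ∑ i, x i * (1 - x i) / m ≤ d / (4 * m) := by
    have h1 : ∀ i : Fin d, x i * (1 - x i) / m ≤ (1 / 4) / m := fun i => by
      gcongr
      nlinarith [sq_nonneg (x i - 1 / 2)]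
    calc ∑ i, x i * (1 - x i) / m ≤ ∑ _i : Fin d, (1 / 4 : ℝ) / m :=
          Finset.sum_le_sum fun i _ => h1 i
      _ = d * ((1 / 4) / m) := by rw [Finset.sum_const, Finset.card_univ, Fintype.card_fin]; simp
      _ = d / (4 * m) := by ring
  have hMle : C * d / (δ ^ 2 * ε) ≤ (m : ℝ) := by
    have h1 : C * d / (δ ^ 2 * ε) ≤ (⌈C * d / (δ ^ 2 * ε)⌉₊ : ℝ) := Nat.le_ceil _
    have h2 : (⌈C * d / (δ ^ 2 * ε)⌉₊ : ℝ) ≤ (m : ℝ) := by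
      exact_mod_cast le_trans (Nat.le_succ _) hm
    linarith
  have hCd : C * d ≤ δ ^ 2 * ε * m := by
    rw [div_le_iff₀ (by positivity)] at hMle
    calc C * (d : ℝ) ≤ (m : ℝ) * (δ ^ 2 * ε) := hMle
      _ = δ ^ 2 * ε * m := by ring
  have hfinal : (2 * C / δ ^ 2) * ((d : ℝ) / (4 * m)) ≤ ε / 2 := by
    rw [div_mul_div_comm, div_le_div_iff₀ (by positivity) (by norm_num)]
    nlinarith
  have hmono : (2 * C / δ ^ 2) * (∑ i, x i * (1 - x i) / m)
      ≤ (2 * C / δ ^ 2) * ((d : ℝ) / (4 * m)) :=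
    mul_le_mul_of_nonneg_left hbound2 (by positivity)
  linarith
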